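/- arXiv:1608.07509 — 2 statements merged into one kernel-verified Lean document; each statement's English description precedes it below -/
import Mathlib

section
/- Let V be a finite-dimensional vector space with non-degenerate symmetric bilinear form B, and let (v_i), (v^i) be dual bases of V with respect to B. Then in the algebra S(V) ⊗ C(V), the element D̄ = Σᵢ v_i ⊗ v^i satisfies D̄² = Ω ⊗ 1, where Ω = Σᵢ v_i v^i ∈ S(V). -/
open TensorProduct CliffordAlgebra

/-- in `S(V) ⊗ C(V)` (the symmetric algebra modelled by a commutative
algebra `A` with a linear map `j : V → A`), with dual bases `(vᵢ), (vⁱ)` of `V`, the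
element `D̄ = Σᵢ vᵢ ⊗ vⁱ` satisfies `D̄² = Ω ⊗ 1`, where `Ω = Σᵢ vᵢ vⁱ`. -/
theorem stmt11 {F V A : Type*} [Field F] [CharZero F] [AddCommGroup V] [Module F V]
    [FiniteDimensional F V] [CommRing A] [Algebra F A]
    (B : LinearMap.BilinForm F V)
    (hsymm : ∀ v w, B v w = B w v)
    (hnd : ∀ v, (∀ w, B v w = 0) → v = 0)
    (n : ℕ) (bv bv' : Module.Basis (Fin n) F V)
    (hdual : ∀ i j, B (bv i) (bv' j) = if i = j then (1 : F) else 0)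
    (j : V →ₗ[F] A) :
    (∑ i, j (bv i) ⊗ₜ[F] ι (LinearMap.BilinMap.toQuadraticMap B) (bv' i)) *
        (∑ i, j (bv i) ⊗ₜ[F] ι (LinearMap.BilinMap.toQuadraticMap B) (bv' i))
      = (∑ i, j (bv i) * j (bv' i)) ⊗ₜ[F]
          (1 : CliffordAlgebra (LinearMap.BilinMap.toQuadraticMap B)) := by
  classical
  set Q := LinearMap.BilinMap.toQuadraticMap B with hQ
  -- dual expansion: bv' i = Σ k, B (bv' i) (bv' k) • bv k
  have hexp : ∀ i, bv' i = ∑ k, B (bv' i) (bv' k) • bv k := by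
    intro i
    have hzero : B (bv' i - ∑ k, B (bv' i) (bv' k) • bv k) = 0 := by
      apply bv'.ext
      intro m
      simp only [map_sub, map_sum, map_smul, LinearMap.sub_apply, LinearMap.sum_apply,
        LinearMap.smul_apply, LinearMap.zero_apply, smul_eq_mul]
      rw [Finset.sum_eq_single m]
      · rw [hdual]; simp
      · intro k _ hk; rw [hdual]; simp [hk]
      · simp
    have := hnd _ (fun w => by rw [hzero]; rfl)
    exact sub_eq_zero.mp this
  set a : Fin n → A := fun i => j (bv i) with ha
  set c : Fin n → CliffordAlgebra Q := fun i => ι Q (bv' i) with hc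
  have hS : (∑ i, a i ⊗ₜ[F] c i) * (∑ i, a i ⊗ₜ[F] c i)
      = ∑ i, ∑ k, (a i * a k) ⊗ₜ[F] (c i * c k) := by
    rw [Finset.sum_mul_sum]
    simp [Algebra.TensorProduct.tmul_mul_tmul]
  -- swapped version
  have hS' : (∑ i, a i ⊗ₜ[F] c i) * (∑ i, a i ⊗ₜ[F] c i)
      = ∑ i, ∑ k, (a i * a k) ⊗ₜ[F] (c k * c i) := by
    rw [hS, Finset.sum_comm]
    simp_rw [mul_comm]
  set Ω : A := ∑ i, j (bv i) * j (bv' i) with hΩ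
  have hdouble : (∑ i, a i ⊗ₜ[F] c i) * (∑ i, a i ⊗ₜ[F] c i)
      + (∑ i, a i ⊗ₜ[F] c i) * (∑ i, a i ⊗ₜ[F] c i)
      = Ω ⊗ₜ[F] (1 : CliffordAlgebra Q) + Ω ⊗ₜ[F] (1 : CliffordAlgebra Q) := by
    nth_rewrite 1 [hS]
    nth_rewrite 1 [hS']
    rw [← Finset.sum_add_distrib]
    simp_rw [← Finset.sum_add_distrib, ← TensorProduct.tmul_add]
    have hcl : ∀ i k, c i * c k + c k * c i
        = algebraMap F (CliffordAlgebra Q) (B (bv' i) (bv' k) + B (bv' k) (bv' i)) := by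
      intro i k
      rw [hc]
      rw [CliffordAlgebra.ι_mul_ι_add_swap, hQ, LinearMap.BilinMap.polar_toQuadraticMap]
    simp_rw [hcl]
    have htm : ∀ (x : A) (r : F), x ⊗ₜ[F] (algebraMap F (CliffordAlgebra Q) r)
        = (r • x) ⊗ₜ[F] (1 : CliffordAlgebra Q) := by
      intro x r
      rw [Algebra.algebraMap_eq_smul_one, TensorProduct.tmul_smul, TensorProduct.smul_tmul']
    simp_rw [htm, ← TensorProduct.sum_tmul]
    rw [TensorProduct.tmul_add, ← TensorProduct.add_tmul]
    congr 1
    have hΩexp : Ω = ∑ i, ∑ k, B (bv' i) (bv' k) • (a i * a k) := by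
      rw [hΩ]
      apply Finset.sum_congr rfl
      intro i _
      rw [show j (bv' i) = j (∑ k, B (bv' i) (bv' k) • bv k) by rw [← hexp i]]
      rw [map_sum, Finset.mul_sum]
      apply Finset.sum_congr rfl
      intro k _
      rw [map_smul, mul_smul_comm]
    rw [hΩexp]
    simp_rw [add_smul, Finset.sum_add_distrib]
    congr 1
    rw [Finset.sum_comm]
    simp_rw [mul_comm]
  have h2 : (2:F) • ((∑ i, a i ⊗ₜ[F] c i) * (∑ i, a i ⊗ₜ[F] c i))
      = (2:F) • (Ω ⊗ₜ[F] (1 : CliffordAlgebra Q)) := by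
    rw [two_smul, two_smul]
    exact hdouble
  have := smul_right_injective (A ⊗[F] CliffordAlgebra Q) (two_ne_zero (α := F)) h2
  exact this
end

section
/- Let A = (T(V) ⋊ H)/I_κ be an algebra where H is a cocommutative Hopf algebra, V a finite-dimensional H-module with H-invariant non-degenerate symmetric bilinear form B, κ : V ∧ V → H an H-linear map, and I_κ the ideal generated by vw − wv − κ(v∧w). Let (v_k), (v^k) be dual bases of V with respect to B, C = C(V) the Clifford algebra, D = Σ_k v_k ⊗ v^k ∈ A ⊗ C, and Ω = Σ_k v_k v^k ∈ A. Then D² = Ω ⊗ 1 + (1/2) Σ_{k<l} κ(v_k, v_l) ⊗ [v^k, v^l], where [·,·] is the commutator in C. -/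
open TensorProduct CliffordAlgebra

/-- Sweedler-type map: sends `a ⊗ b` to `B (a • v) (b • w)`. -/
noncomputable def sweedlerB {F H V : Type*} [CommRing F] [Ring H] [Algebra F H]
    [AddCommGroup V] [Module F V]
    (act : H →ₗ[F] Module.End F V) (B : V →ₗ[F] V →ₗ[F] F) (v w : V) :
    H ⊗[F] H →ₗ[F] F :=
  TensorProduct.lift (B.compl₁₂ ((LinearMap.applyₗ v).comp act) ((LinearMap.applyₗ w).comp act))

private lemma sum_pairs_aux {M : Type*} [AddCommMonoid M] {n : ℕ} (f : Fin n → Fin n → M) :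
    ∑ k, ∑ l, f k l = ∑ k, f k k + ∑ k, ∑ l ∈ Finset.Ioi k, (f k l + f l k) := by
  have swap : ∑ k, ∑ l ∈ Finset.Iio k, f k l = ∑ k, ∑ l ∈ Finset.Ioi k, f l k :=
    Finset.sum_comm' (by simp)
  have split : ∀ k : Fin n, ∑ l, f k l
      = f k k + (∑ l ∈ Finset.Ioi k, f k l + ∑ l ∈ Finset.Iio k, f k l) := by
    intro k
    rw [← Finset.sum_disjUnion (Finset.disjoint_Ioi_Iio k), Finset.Ioi_disjUnion_Iio,
      ← Finset.sum_compl_add_sum {k} (f k), Finset.sum_singleton, add_comm]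
  simp_rw [split, Finset.sum_add_distrib, swap]

private lemma pair_identity {F A C : Type*} [Field F] [CharZero F] [Ring A] [Algebra F A]
    [Ring C] [Algebra F C] (x y κa : A) (u w : C) (β : F)
    (hκ : x - y = κa) (hw : w = (2 * β) • (1 : C) - u) :
    x ⊗ₜ[F] u + y ⊗ₜ[F] w
      = (β • (x + y)) ⊗ₜ[F] (1 : C) + (2 : F)⁻¹ • (κa ⊗ₜ[F] (u - w)) := by
  subst hw
  rw [← hκ]
  simp only [TensorProduct.tmul_sub, TensorProduct.sub_tmul, TensorProduct.tmul_add,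
    TensorProduct.add_tmul, TensorProduct.tmul_smul, ← TensorProduct.smul_tmul',
    smul_sub, smul_add, smul_smul]
  match_scalars <;> ring

/-- Let `A = (T(V) ⋊ H)/I_κ` where `H` is a cocommutative Hopf algebra,
`V` a finite-dimensional `H`-module with `H`-invariant non-degenerate symmetric bilinear
form `B`, and `κ : V ∧ V → H` an `H`-linear (for the adjoint action) map; `A` is presented
by a linear map `jV : V → A`, an algebra map `jH : H → A`, the smash-product relation
`h v = (h₍₁₎ • v) h₍₂₎` and the relation `v w − w v = κ(v,w)`.  With dual bases
`(v_k), (vᵏ)` of `V`, `D = Σ_k v_k ⊗ vᵏ ∈ A ⊗ C(V)` and `Ω = Σ_k v_k vᵏ ∈ A`, one has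
`D² = Ω ⊗ 1 + (1/2) Σ_{k<l} κ(v_k, v_l) ⊗ [vᵏ, vˡ]`. -/
theorem stmt12 {F H V A : Type*} [Field F] [CharZero F] [Ring H] [HopfAlgebra F H]
    [AddCommGroup V] [Module F V] [FiniteDimensional F V] [Ring A] [Algebra F A]
    (hcc : ∀ h : H, (TensorProduct.comm F H H) (Coalgebra.comul (R := F) h)
        = Coalgebra.comul (R := F) h)
    (ρ : H →ₐ[F] Module.End F V)
    (B : LinearMap.BilinForm F V)
    (hsymm : ∀ v w, B v w = B w v)
    (hnd : ∀ v, (∀ w, B v w = 0) → v = 0)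
    (hinv : ∀ (h : H) (v w : V),
        sweedlerB ρ.toLinearMap B v w (Coalgebra.comul (R := F) h)
          = Coalgebra.counit (R := F) h * B v w)
    (κ : V →ₗ[F] V →ₗ[F] H)
    (hκalt : ∀ v : V, κ v v = 0)
    (hκlin : ∀ (h : H) (v w : V),
        TensorProduct.lift (κ.compl₁₂ ((LinearMap.applyₗ v).comp ρ.toLinearMap)
            ((LinearMap.applyₗ w).comp ρ.toLinearMap)) (Coalgebra.comul (R := F) h)
          = TensorProduct.lift ((LinearMap.mul F H).compl₂
              ((LinearMap.mulLeft F (κ v w)).comp (HopfAlgebra.antipode (R := F))))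
              (Coalgebra.comul (R := F) h))
    (jV : V →ₗ[F] A) (jH : H →ₐ[F] A)
    (hsmash : ∀ (h : H) (v : V),
        jH h * jV v = TensorProduct.lift ((LinearMap.mul F A).compl₁₂
            (jV ∘ₗ ((LinearMap.applyₗ v).comp ρ.toLinearMap)) jH.toLinearMap)
          (Coalgebra.comul (R := F) h))
    (hrel : ∀ v w : V, jV v * jV w - jV w * jV v = jH (κ v w))
    (n : ℕ) (bv bv' : Module.Basis (Fin n) F V)
    (hdual : ∀ i j, B (bv i) (bv' j) = if i = j then (1 : F) else 0) :
    (∑ k, jV (bv k) ⊗ₜ[F] ι (LinearMap.BilinMap.toQuadraticMap B) (bv' k)) *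
        (∑ k, jV (bv k) ⊗ₜ[F] ι (LinearMap.BilinMap.toQuadraticMap B) (bv' k))
      = (∑ k, jV (bv k) * jV (bv' k)) ⊗ₜ[F]
            (1 : CliffordAlgebra (LinearMap.BilinMap.toQuadraticMap B))
        + (2 : F)⁻¹ • ∑ k, ∑ l ∈ Finset.Ioi k,
            jH (κ (bv k) (bv l)) ⊗ₜ[F]
              (ι (LinearMap.BilinMap.toQuadraticMap B) (bv' k) *
                  ι (LinearMap.BilinMap.toQuadraticMap B) (bv' l)
                - ι (LinearMap.BilinMap.toQuadraticMap B) (bv' l) *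
                  ι (LinearMap.BilinMap.toQuadraticMap B) (bv' k)) := by
  classical
  -- expansion of the dual basis in terms of `bv`
  have hexp : ∀ k, jV (bv' k) = ∑ l, B (bv' k) (bv' l) • jV (bv l) := by
    intro k
    have hv : bv' k = ∑ l, B (bv' k) (bv' l) • bv l := by
      have hb : ∀ j, B (bv' k - ∑ l, B (bv' k) (bv' l) • bv l) (bv' j) = 0 := by
        intro j
        simp [map_sub, map_sum, map_smul, LinearMap.sub_apply, LinearMap.sum_apply,
          LinearMap.smul_apply, hdual, smul_eq_mul]
      have key : ∀ w, B (bv' k - ∑ l, B (bv' k) (bv' l) • bv l) w = 0 := by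
        intro w
        rw [← bv'.sum_repr w]
        simp only [map_sum, map_smul, hb, smul_zero, Finset.sum_const_zero]
      exact (sub_eq_zero.mp (hnd _ key))
    conv_lhs => rw [hv]
    simp [map_sum, map_smul]
  -- the pairwise identity
  have hpair : ∀ k l : Fin n,
      (jV (bv k) * jV (bv l)) ⊗ₜ[F] (ι (LinearMap.BilinMap.toQuadraticMap B) (bv' k) * ι (LinearMap.BilinMap.toQuadraticMap B) (bv' l))
        + (jV (bv l) * jV (bv k)) ⊗ₜ[F] (ι (LinearMap.BilinMap.toQuadraticMap B) (bv' l) * ι (LinearMap.BilinMap.toQuadraticMap B) (bv' k))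
      = (B (bv' k) (bv' l) • (jV (bv k) * jV (bv l) + jV (bv l) * jV (bv k)))
            ⊗ₜ[F] (1 : CliffordAlgebra (LinearMap.BilinMap.toQuadraticMap B))
        + (2 : F)⁻¹ • (jH (κ (bv k) (bv l)) ⊗ₜ[F]
            (ι (LinearMap.BilinMap.toQuadraticMap B) (bv' k) * ι (LinearMap.BilinMap.toQuadraticMap B) (bv' l) - ι (LinearMap.BilinMap.toQuadraticMap B) (bv' l) * ι (LinearMap.BilinMap.toQuadraticMap B) (bv' k))) := by
    intro k l
    refine pair_identity _ _ _ _ _ _ (hrel _ _) ?_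
    rw [CliffordAlgebra.ι_mul_ι_comm, LinearMap.BilinMap.polar_toQuadraticMap,
      show B (bv' l) (bv' k) + B (bv' k) (bv' l) = 2 * B (bv' k) (bv' l) by
        rw [hsymm (bv' l) (bv' k)]; ring,
      Algebra.algebraMap_eq_smul_one]
  -- the diagonal identity
  have hdiag : ∀ k : Fin n,
      (jV (bv k) * jV (bv k)) ⊗ₜ[F] (ι (LinearMap.BilinMap.toQuadraticMap B) (bv' k) * ι (LinearMap.BilinMap.toQuadraticMap B) (bv' k))
      = (B (bv' k) (bv' k) • (jV (bv k) * jV (bv k))) ⊗ₜ[F] (1 : CliffordAlgebra (LinearMap.BilinMap.toQuadraticMap B)) := by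
    intro k
    rw [CliffordAlgebra.ι_sq_scalar, LinearMap.BilinMap.toQuadraticMap_apply,
      Algebra.algebraMap_eq_smul_one, TensorProduct.tmul_smul, TensorProduct.smul_tmul']
  rw [Finset.sum_mul_sum]
  simp_rw [Algebra.TensorProduct.tmul_mul_tmul]
  rw [sum_pairs_aux]
  simp_rw [hpair, hdiag, Finset.sum_add_distrib, ← Finset.smul_sum]
  rw [← add_assoc]
  congr 1
  simp_rw [← TensorProduct.sum_tmul]
  rw [← TensorProduct.add_tmul]
  congr 1
  have : ∀ k, jV (bv k) * jV (bv' k) = ∑ l, B (bv' k) (bv' l) • (jV (bv k) * jV (bv l)) := by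
    intro k
    rw [hexp k, Finset.mul_sum]
    simp_rw [mul_smul_comm]
  simp_rw [this]
  rw [sum_pairs_aux (fun k l => B (bv' k) (bv' l) • (jV (bv k) * jV (bv l)))]
  congr 1
  refine Finset.sum_congr rfl fun k _ => Finset.sum_congr rfl fun l _ => ?_
  rw [hsymm (bv' l) (bv' k), smul_add]
end
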